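/- For the module actions Ã₀|n⟩ = (n+μ+1/2)|n⟩, P̃|n⟩ = ε(−1)^n|n⟩, Ã₊|n⟩ = √(σ̃_{n+1})|n+1⟩, Ã₋|n⟩ = √(σ̃_n)|n−1⟩ with σ̃_n = n + μ(1 − (−1)^n), the Casimir Q̃ = (Ã₊Ã₋ − (Ã₀ − 1/2))P̃ acts as the scalar −εμ on every basis vector |n⟩. -/
import Mathlib


theorem stmt_18 (μ ε : ℝ) (hμ : 0 < μ) (hε : ε = 1 ∨ ε = -1)
    {V : Type*} [AddCommGroup V] [Module ℂ V]
    (e : ℕ → V)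
    (σ : ℕ → ℝ) (hσ : ∀ n : ℕ, σ n = (n : ℝ) + μ * (1 - (-1) ^ n))
    (A0 Ap Am P : V →ₗ[ℂ] V)
    (hA0 : ∀ n : ℕ, A0 (e n) = (((n : ℝ) + μ + 1 / 2 : ℝ) : ℂ) • e n)
    (hP : ∀ n : ℕ, P (e n) = ((ε * (-1) ^ n : ℝ) : ℂ) • e n)
    (hAp : ∀ n : ℕ, Ap (e n) = ((Real.sqrt (σ (n + 1)) : ℝ) : ℂ) • e (n + 1))
    (hAm0 : Am (e 0) = 0)
    (hAm : ∀ n : ℕ, Am (e (n + 1)) = ((Real.sqrt (σ (n + 1)) : ℝ) : ℂ) • e n) :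
    ∀ n : ℕ,
      Ap (Am (P (e n))) - A0 (P (e n)) + (1 / 2 : ℂ) • P (e n)
        = ((-ε * μ : ℝ) : ℂ) • e n := by
  intro n
  have hσnn : ∀ m : ℕ, 0 ≤ σ m := by
    intro m
    rw [hσ m]
    have : (0:ℝ) ≤ 1 - (-1)^m := by
      rcases Nat.even_or_odd m with h | h
      · simp [h.neg_one_pow]
      · simp [h.neg_one_pow]
    positivity
  cases n with
  | zero =>
    rw [hP 0, map_smul, map_smul, hAm0, map_smul, hA0 0, smul_smul, map_zero, smul_zero]
    rw [smul_smul, zero_sub, ← neg_smul, ← add_smul]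
    congr 1
    push_cast
    ring
  | succ n =>
    have hs : (Real.sqrt (σ (n+1)) : ℂ) * (Real.sqrt (σ (n+1)) : ℂ) = (σ (n+1) : ℂ) := by
      rw [← Complex.ofReal_mul, Real.mul_self_sqrt (hσnn (n+1))]
    rw [hP (n+1), map_smul, hAm n, map_smul, map_smul, hAp n, map_smul, hA0 (n+1),
      smul_smul, smul_smul, smul_smul, smul_smul, ← sub_smul, ← add_smul]
    congr 1
    rw [mul_assoc, hs]
    rw [hσ (n+1)]
    have ht : ((-1:ℂ))^(n+1) * ((-1:ℂ))^(n+1) = 1 := by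
      rw [← pow_add, Even.neg_one_pow ⟨n+1, rfl⟩]
    push_cast
    linear_combination (-(ε:ℂ) * μ) * ht
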